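/- Suppose E₁, E₀ ≥ 0, α ∈ (0,1), β ∈ (α,1], c ∈ (0,1), E_f = α·E₁ + (1−α)·E₀ > 0, E_g = β·E₁ + (1−β)·E₀, ρ = α·E₁/E_f, and ρ^pu = c·E_g/(c·E_g + (1−c)·E_f). Then ρ = (α·(1−α)/(β−α))·(((1−c)/c)·(ρ^pu/(1−ρ^pu)) − (1−β)/(1−α)). -/

import Mathlib

theorem precision_recovery (α β c E1 E0 Ef Eg ρ ρpu : ℝ)
    (hE1 : 0 ≤ E1) (hE0 : 0 ≤ E0)
    (hα0 : 0 < α) (hα1 : α < 1) (hβ1 : α < β) (hβ2 : β ≤ 1)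
    (hc0 : 0 < c) (hc1 : c < 1)
    (hf : Ef = α * E1 + (1 - α) * E0) (hEf : 0 < Ef)
    (hg : Eg = β * E1 + (1 - β) * E0)
    (hρ : ρ = α * E1 / Ef)
    (hρpu : ρpu = c * Eg / (c * Eg + (1 - c) * Ef)) :
    ρ = (α * (1 - α) / (β - α)) *
      (((1 - c) / c) * (ρpu / (1 - ρpu)) - (1 - β) / (1 - α)) := by
  have hEg : 0 ≤ Eg := by
    have h1 : (0:ℝ) ≤ β := le_of_lt (lt_trans hα0 hβ1)
    have h2 := mul_nonneg h1 hE1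
    have h3 := mul_nonneg (by linarith : (0:ℝ) ≤ 1 - β) hE0
    linarith
  have hD : 0 < c * Eg + (1 - c) * Ef := by
    have := mul_nonneg hc0.le hEg
    nlinarith
  have h1 : 1 - ρpu = (1 - c) * Ef / (c * Eg + (1 - c) * Ef) := by
    rw [hρpu]; field_simp; ring
  have hratio : ρpu / (1 - ρpu) = c * Eg / ((1 - c) * Ef) := by
    rw [h1, hρpu, div_div_div_eq]
    rw [mul_comm (c * Eg) (c * Eg + (1 - c) * Ef), mul_div_mul_left _ _ hD.ne']
  rw [hρ, hratio, hf, hg]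
  have hβα : β - α ≠ 0 := by linarith
  have hα1' : (1:ℝ) - α ≠ 0 := by linarith
  have hc1' : (1:ℝ) - c ≠ 0 := by linarith
  have hEf' : α * E1 + (1 - α) * E0 ≠ 0 := by rw [hf] at hEf; linarith
  field_simp
  ring
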